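/- arXiv:cs/0604107 — 4 statements merged into one kernel-verified Lean document; each statement's English description precedes it below -/
import Mathlib

section
/- For real parameters $P_p > 0$, $P_c > 0$ and $0 < a \le 1$, the value $\alpha^* = \left(\frac{\sqrt{P_p}(\sqrt{1+a^2 P_c(1+P_p)}-1)}{a\sqrt{P_c}(1+P_p)}\right)^{1/2}$ lies in the interval $[0,1]$. -/
open Real

theorem alphaStar_mem_Icc (Pp Pc a : ℝ) (hPp : 0 < Pp) (hPc : 0 < Pc)
    (ha : 0 < a) (ha1 : a ≤ 1) :
    Real.sqrt (Real.sqrt Pp * (Real.sqrt (1 + a ^ 2 * Pc * (1 + Pp)) - 1)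
      / (a * Real.sqrt Pc * (1 + Pp))) ∈ Set.Icc (0 : ℝ) 1 := by
  have hsp : 0 < Real.sqrt Pp := Real.sqrt_pos.mpr hPp
  have hsc : 0 < Real.sqrt Pc := Real.sqrt_pos.mpr hPc
  have h1p : 0 < 1 + Pp := by linarith
  have hden : 0 < a * Real.sqrt Pc * (1 + Pp) := by positivity
  set c : ℝ := a * Real.sqrt Pc * (1 + Pp) / Real.sqrt Pp with hc
  have hc0 : 0 ≤ c := by positivity
  have hcsq : c ^ 2 = a ^ 2 * Pc * (1 + Pp) ^ 2 / Pp := by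
    rw [hc, div_pow, mul_pow, mul_pow, Real.sq_sqrt hPc.le, Real.sq_sqrt hPp.le]
  have hT : a ^ 2 * Pc * (1 + Pp) ≤ c ^ 2 := by
    rw [hcsq, le_div_iff₀ hPp]
    have : Pp ≤ (1 + Pp) := by linarith
    nlinarith [mul_nonneg (mul_nonneg (sq_nonneg a) hPc.le) h1p.le]
  have hkey : Real.sqrt (1 + a ^ 2 * Pc * (1 + Pp)) ≤ 1 + c := by
    have h1 : 1 + a ^ 2 * Pc * (1 + Pp) ≤ (1 + c) ^ 2 := by nlinarith
    calc Real.sqrt (1 + a ^ 2 * Pc * (1 + Pp)) ≤ Real.sqrt ((1 + c) ^ 2) :=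
          Real.sqrt_le_sqrt h1
      _ = 1 + c := Real.sqrt_sq (by linarith)
  constructor
  · exact Real.sqrt_nonneg _
  · rw [Real.sqrt_le_one, div_le_one hden]
    have : Real.sqrt Pp * (Real.sqrt (1 + a ^ 2 * Pc * (1 + Pp)) - 1)
        ≤ Real.sqrt Pp * c := by nlinarith
    calc Real.sqrt Pp * (Real.sqrt (1 + a ^ 2 * Pc * (1 + Pp)) - 1)
        ≤ Real.sqrt Pp * c := this
      _ = a * Real.sqrt Pc * (1 + Pp) := by
          rw [hc, mul_div_cancel₀ _ hsp.ne']
      _ ≤ 1 * (a * Real.sqrt Pc * (1 + Pp)) := by linarith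
      _ = a * Real.sqrt Pc * (1 + Pp) := one_mul _
end

section
/- Fix $P_p > 0$, $P_c > 0$, $a > 0$. Define $g(\alpha) = \frac{(\sqrt{P_p}+a\sqrt{\alpha P_c})^2}{1+a^2(1-\alpha)P_c}$ for $\alpha \in [0,1]$. Then $g$ is strictly increasing on $[0,1]$. -/
open Real

theorem sinr_strictMonoOn (Pp Pc a : ℝ) (hPp : 0 < Pp) (hPc : 0 < Pc) (ha : 0 < a) :
    StrictMonoOn (fun α : ℝ =>
      (Real.sqrt Pp + a * Real.sqrt (α * Pc)) ^ 2 / (1 + a ^ 2 * (1 - α) * Pc))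
      (Set.Icc (0 : ℝ) 1) := by
  intro x hx y hy hxy
  simp only
  have hDx : 0 < 1 + a ^ 2 * (1 - x) * Pc := by
    nlinarith [mul_nonneg (mul_nonneg (sq_nonneg a) (by linarith [hx.2] : (0:ℝ) ≤ 1 - x)) hPc.le]
  have hDy : 0 < 1 + a ^ 2 * (1 - y) * Pc := by
    nlinarith [mul_nonneg (mul_nonneg (sq_nonneg a) (by linarith [hy.2] : (0:ℝ) ≤ 1 - y)) hPc.le]
  have hsp : 0 < Real.sqrt Pp := Real.sqrt_pos.2 hPp
  have hAx : 0 < Real.sqrt Pp + a * Real.sqrt (x * Pc) := by positivity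
  have hslt : Real.sqrt (x * Pc) < Real.sqrt (y * Pc) :=
    Real.sqrt_lt_sqrt (mul_nonneg hx.1 hPc.le) (mul_lt_mul_of_pos_right hxy hPc)
  have hAlt : Real.sqrt Pp + a * Real.sqrt (x * Pc) < Real.sqrt Pp + a * Real.sqrt (y * Pc) := by
    have := mul_lt_mul_of_pos_left hslt ha
    linarith
  have hDlt : 1 + a ^ 2 * (1 - y) * Pc < 1 + a ^ 2 * (1 - x) * Pc := by
    nlinarith [mul_pos (mul_pos (pow_pos ha 2) hPc) (sub_pos.2 hxy)]
  calc (Real.sqrt Pp + a * Real.sqrt (x * Pc)) ^ 2 / (1 + a ^ 2 * (1 - x) * Pc)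
      < (Real.sqrt Pp + a * Real.sqrt (x * Pc)) ^ 2 / (1 + a ^ 2 * (1 - y) * Pc) := by
        apply div_lt_div_of_pos_left (by positivity) hDy hDlt
    _ < (Real.sqrt Pp + a * Real.sqrt (y * Pc)) ^ 2 / (1 + a ^ 2 * (1 - y) * Pc) := by
        apply div_lt_div_of_pos_right _ hDy
        exact pow_lt_pow_left₀ hAlt hAx.le (by norm_num)
end

section
/- Let $P_p, P_c > 0$, $a \ge 1$, and $\mu \ge 1$. Then $\max_{0\le\alpha\le 1} \left[\frac{\mu}{2}\log\left(1+\frac{(\sqrt{P_p}+a\sqrt{\alpha P_c})^2}{1+a^2(1-\alpha)P_c}\right) + \frac{1}{2}\log(1+(1-\alpha)P_c)\right] = \frac{\mu}{2}\log\left(1+(\sqrt{P_p}+a\sqrt{P_c})^2\right)$, and the maximum is attained at $\alpha = 1$. -/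
open Real

private lemma sum_cap_aux (s t u a μ c : ℝ) (hs : 0 ≤ s) (ht : 0 ≤ t) (hu : 0 ≤ u)
    (ha : 1 ≤ a) (hμ : 1 ≤ μ) (hc : 0 ≤ c) (hcu : t ^ 2 + c = u ^ 2) :
    μ / 2 * Real.log (1 + (s + a * t) ^ 2 / (1 + a ^ 2 * c))
      + 1 / 2 * Real.log (1 + c)
    ≤ μ / 2 * Real.log (1 + (s + a * u) ^ 2) := by
  have ha0 : 0 < a := lt_of_lt_of_le one_pos ha
  have htu : t ≤ u := by nlinarith
  have hD : (0:ℝ) < 1 + a ^ 2 * c := by nlinarith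
  have hN : (0:ℝ) ≤ (s + a * t) ^ 2 := sq_nonneg _
  have hM : (0:ℝ) ≤ (s + a * u) ^ 2 := sq_nonneg _
  have hS : (0:ℝ) ≤ (s + a * t) ^ 2 / (1 + a ^ 2 * c) := div_nonneg hN hD.le
  have hau : 0 ≤ a * s * (u - t) := mul_nonneg (mul_nonneg ha0.le hs) (by linarith)
  have ha2c : 0 ≤ a ^ 2 * c := mul_nonneg (sq_nonneg a) hc
  have ha21 : 0 ≤ (a ^ 2 - 1) * c := mul_nonneg (by nlinarith) hc
  have hNM : (s + a * t) ^ 2 ≤ (s + a * u) ^ 2 := by nlinarith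
  have key1 : (s + a * t) ^ 2 / (1 + a ^ 2 * c) ≤ (s + a * u) ^ 2 := by
    rw [div_le_iff₀ hD]; nlinarith [mul_nonneg hM ha2c]
  have hb : (0:ℝ) < 1 + c := by linarith
  have key2 : (1 + (s + a * t) ^ 2 / (1 + a ^ 2 * c)) * (1 + c)
      ≤ 1 + (s + a * u) ^ 2 := by
    have heq : 1 + (s + a * t) ^ 2 / (1 + a ^ 2 * c)
        = (1 + a ^ 2 * c + (s + a * t) ^ 2) / (1 + a ^ 2 * c) := by
      field_simp
    rw [heq, div_mul_eq_mul_div, div_le_iff₀ hD]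
    have h1' : 1 + c ≤ 1 + a ^ 2 * c := by nlinarith [ha21]
    have h2' : 1 + a ^ 2 * c + (s + a * t) ^ 2 ≤ 1 + (s + a * u) ^ 2 := by nlinarith [hau]
    calc (1 + a ^ 2 * c + (s + a * t) ^ 2) * (1 + c)
        ≤ (1 + a ^ 2 * c + (s + a * t) ^ 2) * (1 + a ^ 2 * c) :=
          mul_le_mul_of_nonneg_left h1' (by positivity)
      _ ≤ (1 + (s + a * u) ^ 2) * (1 + a ^ 2 * c) :=
          mul_le_mul_of_nonneg_right h2' hD.le
  have h1S : (0:ℝ) < 1 + (s + a * t) ^ 2 / (1 + a ^ 2 * c) := by linarith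
  have hlog1 : Real.log (1 + (s + a * t) ^ 2 / (1 + a ^ 2 * c))
      ≤ Real.log (1 + (s + a * u) ^ 2) := Real.log_le_log h1S (by linarith)
  have hlog0 : 0 ≤ Real.log (1 + (s + a * t) ^ 2 / (1 + a ^ 2 * c)) :=
    Real.log_nonneg (by linarith)
  have hlogsum : Real.log (1 + (s + a * t) ^ 2 / (1 + a ^ 2 * c)) + Real.log (1 + c)
      ≤ Real.log (1 + (s + a * u) ^ 2) := by
    rw [← Real.log_mul h1S.ne' hb.ne']
    exact Real.log_le_log (by positivity) key2
  linarith [mul_le_mul_of_nonneg_left hlog1 (by linarith : (0:ℝ) ≤ μ - 1)]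

theorem sum_capacity_lemma (Pp Pc a μ : ℝ) (hPp : 0 < Pp) (hPc : 0 < Pc)
    (ha : 1 ≤ a) (hμ : 1 ≤ μ) :
    (∀ α ∈ Set.Icc (0 : ℝ) 1,
      (μ / 2) * Real.log (1 +
          (Real.sqrt Pp + a * Real.sqrt (α * Pc)) ^ 2 / (1 + a ^ 2 * (1 - α) * Pc))
        + (1 / 2) * Real.log (1 + (1 - α) * Pc)
      ≤ (μ / 2) * Real.log (1 + (Real.sqrt Pp + a * Real.sqrt Pc) ^ 2)) ∧
    (μ / 2) * Real.log (1 +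
        (Real.sqrt Pp + a * Real.sqrt ((1 : ℝ) * Pc)) ^ 2 / (1 + a ^ 2 * (1 - 1) * Pc))
      + (1 / 2) * Real.log (1 + (1 - 1) * Pc)
    = (μ / 2) * Real.log (1 + (Real.sqrt Pp + a * Real.sqrt Pc) ^ 2) := by
  constructor
  · rintro α ⟨h0, h1⟩
    have hαPc : 0 ≤ α * Pc := by nlinarith
    have hc : 0 ≤ (1 - α) * Pc := by nlinarith
    have ht2 : Real.sqrt (α * Pc) ^ 2 = α * Pc := Real.sq_sqrt hαPc
    have hu2 : Real.sqrt Pc ^ 2 = Pc := Real.sq_sqrt hPc.le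
    have h := sum_cap_aux (Real.sqrt Pp) (Real.sqrt (α * Pc)) (Real.sqrt Pc) a μ
      ((1 - α) * Pc) (Real.sqrt_nonneg _) (Real.sqrt_nonneg _) (Real.sqrt_nonneg _)
      ha hμ hc (by rw [ht2, hu2]; ring)
    have hrw : a ^ 2 * (1 - α) * Pc = a ^ 2 * ((1 - α) * Pc) := by ring
    rw [hrw]
    exact h
  · norm_num
end

section
/- Let $P_p, P_c > 0$ and $0 < a \le 1$, and let $\alpha^* \in [0,1]$ be the unique solution of $\frac{(\sqrt{P_p}+a\sqrt{\alpha P_c})^2}{1+a^2(1-\alpha)P_c} = P_p$ on $[0,1]$. Then the point $(R_p^*, R_c^*) = \left(\frac{1}{2}\log(1+P_p),\ \frac{1}{2}\log(1+(1-\alpha^*)P_c)\right)$ lies in the region $\bigcup_{\alpha\in[0,1]}\{(R_p,R_c): 0 \le R_p \le \frac{1}{2}\log(1+\frac{(\sqrt{P_p}+a\sqrt{\alpha P_c})^2}{1+a^2(1-\alpha)P_c}),\ 0 \le R_c \le \frac{1}{2}\log(1+(1-\alpha)P_c)\}$, and moreover for every $(R_p, R_c)$ in this region with $R_p \ge \frac{1}{2}\log(1+P_p)$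 one has $R_c \le R_c^*$. -/
open Real

theorem cognitive_capacity_on_boundary (Pp Pc a αs : ℝ) (hPp : 0 < Pp) (hPc : 0 < Pc)
    (ha : 0 < a) (ha1 : a ≤ 1)
    (hαs : αs ∈ Set.Icc (0 : ℝ) 1)
    (hroot : (Real.sqrt Pp + a * Real.sqrt (αs * Pc)) ^ 2
        / (1 + a ^ 2 * (1 - αs) * Pc) = Pp)
    (huniq : ∀ α ∈ Set.Icc (0 : ℝ) 1,
      (Real.sqrt Pp + a * Real.sqrt (α * Pc)) ^ 2 / (1 + a ^ 2 * (1 - α) * Pc) = Pp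
        → α = αs) :
    let region : Set (ℝ × ℝ) := {R | ∃ α ∈ Set.Icc (0 : ℝ) 1,
      0 ≤ R.1 ∧
      R.1 ≤ (1 / 2) * Real.log (1 +
        (Real.sqrt Pp + a * Real.sqrt (α * Pc)) ^ 2 / (1 + a ^ 2 * (1 - α) * Pc)) ∧
      0 ≤ R.2 ∧ R.2 ≤ (1 / 2) * Real.log (1 + (1 - α) * Pc)}
    ((1 / 2) * Real.log (1 + Pp), (1 / 2) * Real.log (1 + (1 - αs) * Pc)) ∈ region ∧
    ∀ R ∈ region, (1 / 2) * Real.log (1 + Pp) ≤ R.1 →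
      R.2 ≤ (1 / 2) * Real.log (1 + (1 - αs) * Pc) := by
  intro region
  obtain ⟨hαs0, hαs1⟩ := hαs
  constructor
  · refine ⟨αs, ⟨hαs0, hαs1⟩, ?_, ?_, ?_, le_refl _⟩
    · have : (0:ℝ) ≤ Real.log (1 + Pp) := Real.log_nonneg (by linarith)
      linarith
    · rw [hroot]
    · have h1 : (0:ℝ) ≤ (1 - αs) * Pc := by nlinarith
      have : (0:ℝ) ≤ Real.log (1 + (1 - αs) * Pc) := Real.log_nonneg (by linarith)
      linarith
  · rintro ⟨Rp, Rc⟩ ⟨α, ⟨hα0, hα1⟩, h1, h2, h3, h4⟩ hRp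
    simp only at h2 h4 hRp ⊢
    -- show αs ≤ α
    clear huniq h1 h3
    have hkey : αs ≤ α := by
      by_contra hc
      push_neg at hc
      set s := Real.sqrt (α * Pc) with hs
      set s' := Real.sqrt (αs * Pc) with hs'
      have hss : s < s' := by
        apply Real.sqrt_lt_sqrt (by positivity)
        nlinarith
      have hs0 : 0 ≤ s := Real.sqrt_nonneg _
      have hsp : 0 < Real.sqrt Pp := Real.sqrt_pos.mpr hPp
      have hbase : Real.sqrt Pp + a * s < Real.sqrt Pp + a * s' := by
        have := mul_lt_mul_of_pos_left hss ha
        linarith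
      have hN : (Real.sqrt Pp + a * s) ^ 2 < (Real.sqrt Pp + a * s') ^ 2 :=
        pow_lt_pow_left₀ hbase (by positivity) (by norm_num)
      have hD' : (0:ℝ) < 1 + a ^ 2 * (1 - αs) * Pc := by
        have := mul_nonneg (mul_nonneg (sq_nonneg a) (by linarith : (0:ℝ) ≤ 1 - αs)) hPc.le
        linarith
      have hD : (0:ℝ) < 1 + a ^ 2 * (1 - α) * Pc := by
        have := mul_nonneg (mul_nonneg (sq_nonneg a) (by linarith : (0:ℝ) ≤ 1 - α)) hPc.le
        linarith
      have hDD : 1 + a ^ 2 * (1 - αs) * Pc ≤ 1 + a ^ 2 * (1 - α) * Pc := by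
        nlinarith [mul_nonneg (mul_nonneg (sq_nonneg a) (by linarith : (0:ℝ) ≤ αs - α)) hPc.le]
      have hflt : (Real.sqrt Pp + a * s) ^ 2 / (1 + a ^ 2 * (1 - α) * Pc) < Pp := by
        have key : (Real.sqrt Pp + a * s) ^ 2 / (1 + a ^ 2 * (1 - α) * Pc)
            < (Real.sqrt Pp + a * s') ^ 2 / (1 + a ^ 2 * (1 - αs) * Pc) := by
          rw [div_lt_div_iff₀ hD hD']
          have t1 := mul_lt_mul_of_pos_right hN hD'
          have t2 := mul_le_mul_of_nonneg_left hDD (sq_nonneg (Real.sqrt Pp + a * s'))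
          linarith
        rwa [hroot] at key
      have hf0 : (0:ℝ) ≤ (Real.sqrt Pp + a * s) ^ 2 / (1 + a ^ 2 * (1 - α) * Pc) :=
        div_nonneg (sq_nonneg _) hD.le
      have hlog : Real.log (1 + (Real.sqrt Pp + a * s) ^ 2 / (1 + a ^ 2 * (1 - α) * Pc))
          < Real.log (1 + Pp) := Real.log_lt_log (by linarith) (by linarith)
      linarith
    have hpos : (0:ℝ) < 1 + (1 - α) * Pc := by nlinarith
    have : Real.log (1 + (1 - α) * Pc) ≤ Real.log (1 + (1 - αs) * Pc) := by
      apply Real.log_le_log hpos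
      nlinarith
    linarith
end
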